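/- For all β > 0 and γ > 0, the ratios D(2n,2m)/D(n,m) and D(2n,m)/D(n,m), as well as K(2n,2m)/K(n,m) and K(2n,m)/K(n,m), all converge to 1 as n, m → ∞, where D(n,m) and K(n,m) denote respectively the determinant and the condition number (largest eigenvalue divided by smallest eigenvalue) of the 3×3 Fisher information matrix corresponding to the grid design ξ_{n,m} = {(i/n, j/m) : i = 0,…,n, j = 0,…,m} on [0,1]². -/

import Mathlib

open Real Filter

/-- Entry `L1` of the Fisher information matrix for an equidistant design with
`n` points and step size `d`, covariance parameter `β`. -/
noncomputable def L1 (β : ℝ) (n : ℕ) (d : ℝ) : ℝ :=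
  (2 - (n : ℝ) + n * exp (β * d)) / (exp (β * d) + 1)

/-- Entry `L2` of the Fisher information matrix. -/
noncomputable def L2 (β : ℝ) (n : ℕ) (d : ℝ) : ℝ :=
  d * ((n : ℝ) - 1) / 2 * L1 β n d

/-- Entry `L3` of the Fisher information matrix. -/
noncomputable def L3 (β : ℝ) (n : ℕ) (d : ℝ) : ℝ :=
  d ^ 2 * ((n : ℝ) - 1) / (exp (2 * β * d) - 1) *
    ((n : ℝ) * (2 * n - 1) * (exp (β * d) - 1) ^ 2 / 6 + n * (exp (β * d) - 1) + 1)
/-- The 3×3 Fisher information matrix for the Ornstein–Uhlenbeck sheet model on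
a directionally equidistant grid with `n` points of step `d` (parameter `β`)
and `m` points of step `δ` (parameter `γ`); `Mi = Li` with `γ, m, δ`. -/
noncomputable def FIM (β γ : ℝ) (n m : ℕ) (d δ : ℝ) : Matrix (Fin 3) (Fin 3) ℝ :=
  !![L1 β n d * L1 γ m δ, L2 β n d * L1 γ m δ, L1 β n d * L2 γ m δ;
     L2 β n d * L1 γ m δ, L3 β n d * L1 γ m δ, L2 β n d * L2 γ m δ;
     L1 β n d * L2 γ m δ, L2 β n d * L2 γ m δ, L1 β n d * L3 γ m δ]

/-- The set of eigenvalues of a real 3×3 matrix (roots of the characteristic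
polynomial). -/
noncomputable def eigSet (A : Matrix (Fin 3) (Fin 3) ℝ) : Set ℝ :=
  {μ : ℝ | (A - μ • (1 : Matrix (Fin 3) (Fin 3) ℝ)).det = 0}

/-- The condition number of a real 3×3 matrix: largest eigenvalue divided by
smallest eigenvalue. -/
noncomputable def condNum (A : Matrix (Fin 3) (Fin 3) ℝ) : ℝ :=
  sSup (eigSet A) / sInf (eigSet A)

/-- Determinant of the Fisher information matrix for the grid design
`ξ_{n,m} = {(i/n, j/m)}` on `[0,1]²` (`n+1` by `m+1` points, steps `1/n`, `1/m`). -/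
noncomputable def Dnm (β γ : ℝ) (n m : ℕ) : ℝ :=
  (FIM β γ (n + 1) (m + 1) (1 / n) (1 / m)).det

/-- Condition number of the Fisher information matrix for the grid design
`ξ_{n,m}` on `[0,1]²`. -/
noncomputable def Knm (β γ : ℝ) (n m : ℕ) : ℝ :=
  condNum (FIM β γ (n + 1) (m + 1) (1 / n) (1 / m))

namespace GridAux

open Matrix RealInnerProductSpace

-- from t1.lean
variable {A : Matrix (Fin 3) (Fin 3) ℝ}

lemma eigSet_eq (hA : A.IsHermitian) : eigSet A = Set.range hA.eigenvalues := by
  ext μ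
  have hU := hA.spectral_theorem
  simp only [Unitary.conjStarAlgAut_apply, Unitary.coe_star] at hU
  set U : Matrix (Fin 3) (Fin 3) ℝ := (hA.eigenvectorUnitary : Matrix (Fin 3) (Fin 3) ℝ) with hUdef
  have hUU : U * star U = 1 := (Matrix.mem_unitaryGroup_iff).mp hA.eigenvectorUnitary.2
  have hUU' : star U * U = 1 := (Matrix.mem_unitaryGroup_iff').mp hA.eigenvectorUnitary.2
  have h1 : (μ • (1:Matrix (Fin 3) (Fin 3) ℝ)) = U * (μ • 1) * star U := by
    rw [Matrix.mul_smul, mul_one, Matrix.smul_mul, hUU]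
  have hD : (diagonal fun i => hA.eigenvalues i - μ)
      = diagonal (RCLike.ofReal ∘ hA.eigenvalues) - μ • (1 : Matrix (Fin 3) (Fin 3) ℝ) := by
    rw [Matrix.smul_one_eq_diagonal, Matrix.diagonal_sub]
    rfl
  have key : A - μ • 1 = U * (diagonal fun i => hA.eigenvalues i - μ) * star U := by
    rw [hD, mul_sub, sub_mul, ← hU, ← h1]
  have hdet : (A - μ • 1).det = ∏ i, (hA.eigenvalues i - μ) := by
    rw [key, Matrix.det_mul, Matrix.det_mul, mul_comm, ← mul_assoc, ← Matrix.det_mul, hUU']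
    simp
  simp only [eigSet, Set.mem_setOf_eq, hdet, Finset.prod_eq_zero_iff, Set.mem_range]
  constructor
  · rintro ⟨i, -, h⟩; exact ⟨i, by linarith⟩
  · rintro ⟨i, h⟩; exact ⟨i, Finset.mem_univ i, by linarith⟩


-- from t2.lean
lemma star_eq_transpose_real (U : Matrix (Fin 3) (Fin 3) ℝ) : star U = Uᵀ := by
  ext i j; simp [Matrix.star_apply]

lemma dot_trans (M : Matrix (Fin 3) (Fin 3) ℝ) (x z : Fin 3 → ℝ) :
    (Mᵀ *ᵥ x) ⬝ᵥ z = x ⬝ᵥ (M *ᵥ z) := by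
  rw [Matrix.mulVec_transpose, ← Matrix.dotProduct_mulVec]

lemma rayleigh_formula (A U : Matrix (Fin 3) (Fin 3) ℝ) (ev : Fin 3 → ℝ)
    (hU : A = U * diagonal ev * Uᵀ) (x : Fin 3 → ℝ) :
    x ⬝ᵥ A *ᵥ x = ∑ i, ev i * (Uᵀ *ᵥ x) i ^ 2 := by
  set y : Fin 3 → ℝ := Uᵀ *ᵥ x with hy
  calc x ⬝ᵥ A *ᵥ x = x ⬝ᵥ (U *ᵥ (diagonal ev *ᵥ y)) := by
        rw [hU, ← Matrix.mulVec_mulVec, ← Matrix.mulVec_mulVec]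
    _ = y ⬝ᵥ (diagonal ev *ᵥ y) := by rw [← dot_trans]
    _ = ∑ i, ev i * y i ^ 2 := by
        simp only [Matrix.mulVec_diagonal, dotProduct, Pi.mul_apply]
        exact Finset.sum_congr rfl fun i _ => by ring

lemma unit_transform (U : Matrix (Fin 3) (Fin 3) ℝ) (hUU : U * Uᵀ = 1)
    (x : Fin 3 → ℝ) (hx : x ⬝ᵥ x = 1) : ∑ i, (Uᵀ *ᵥ x) i ^ 2 = 1 := by
  have : ∑ i, (Uᵀ *ᵥ x) i ^ 2 = (Uᵀ *ᵥ x) ⬝ᵥ (Uᵀ *ᵥ x) := by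
    simp only [dotProduct]
    exact Finset.sum_congr rfl fun i _ => by ring
  rw [this, dot_trans, Matrix.mulVec_mulVec, hUU, Matrix.one_mulVec, hx]


-- from t3.lean
lemma key_mul_exp (c : ℝ) :
    Tendsto (fun n : ℕ => (n : ℝ) * (exp (c / n) - 1)) atTop (nhds c) := by
  have hd : HasDerivAt (fun x : ℝ => exp (c * x)) c 0 := by
    simpa using ((hasDerivAt_id (0:ℝ)).const_mul c).exp
  have hs := hasDerivAt_iff_tendsto_slope.mp hd
  have h0 : Tendsto (fun n : ℕ => (n : ℝ)⁻¹) atTop (nhdsWithin 0 {x | x ≠ 0}) := by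
    apply tendsto_nhdsWithin_of_tendsto_nhds_of_eventually_within _
      tendsto_inv_atTop_nhds_zero_nat
    filter_upwards [eventually_ge_atTop 1] with n hn
    exact inv_ne_zero (Nat.cast_ne_zero.mpr (by omega))
  have := hs.comp h0
  apply this.congr'
  filter_upwards [eventually_ge_atTop 1] with n hn
  have hn' : (n : ℝ) ≠ 0 := Nat.cast_ne_zero.mpr (by omega)
  simp only [Function.comp_apply, slope_def_field]
  rw [mul_zero, Real.exp_zero, sub_zero, ← div_eq_mul_inv c, div_inv_eq_mul]
  ring


-- from t4.lean
lemma exp_div_lim (c : ℝ) : Tendsto (fun n : ℕ => exp (c / n)) atTop (nhds 1) := by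
  have := (Real.continuous_exp.tendsto 0).comp (tendsto_const_div_atTop_nhds_zero_nat c)
  simpa [Function.comp_def] using this

lemma L1_lim (β : ℝ) :
    Tendsto (fun n : ℕ => L1 β (n + 1) (1 / n)) atTop (nhds ((2 + β) / 2)) := by
  have hnum : Tendsto (fun n : ℕ => 2 + ((n : ℝ) * (exp (β / n) - 1) + (exp (β / n) - 1)))
      atTop (nhds (2 + β)) := by
    have := (key_mul_exp β).add ((exp_div_lim β).sub_const 1)
    simpa using (tendsto_const_nhds (x := (2:ℝ))).add (by simpa using this)
  have hden : Tendsto (fun n : ℕ => exp (β / n) + 1) atTop (nhds 2) := by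
    have := (exp_div_lim β).add_const 1
    norm_num at this
    exact this
  have h := hnum.div hden (by norm_num)
  apply h.congr
  intro n
  simp only [Pi.div_apply]
  unfold L1
  simp only [mul_one_div]
  push_cast
  ring

lemma L2_lim (β : ℝ) :
    Tendsto (fun n : ℕ => L2 β (n + 1) (1 / n)) atTop (nhds ((2 + β) / 4)) := by
  have h := (L1_lim β).const_mul (1/2 : ℝ)
  have : (1/2 : ℝ) * ((2 + β)/2) = (2 + β)/4 := by ring
  rw [this] at h
  apply h.congr'
  filter_upwards [eventually_ge_atTop 1] with n hn
  have hn' : (n : ℝ) ≠ 0 := Nat.cast_ne_zero.mpr (by omega)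
  unfold L2
  push_cast
  field_simp
  ring

lemma L3_lim (β : ℝ) (hβ : 0 < β) :
    Tendsto (fun n : ℕ => L3 β (n + 1) (1 / n)) atTop
      (nhds ((β ^ 2 / 3 + β + 1) / (2 * β))) := by
  have hpre : Tendsto (fun n : ℕ => ((n : ℝ) * (exp (2 * β / n) - 1))⁻¹) atTop
      (nhds (2 * β)⁻¹) := (key_mul_exp (2 * β)).inv₀ (by positivity)
  have hB : Tendsto (fun n : ℕ =>
      ((n : ℝ) * (exp (β / n) - 1) + (exp (β / n) - 1)) *
        (2 * ((n : ℝ) * (exp (β / n) - 1)) + (exp (β / n) - 1)) / 6 +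
      ((n : ℝ) * (exp (β / n) - 1) + (exp (β / n) - 1)) + 1) atTop
      (nhds (β * (2 * β) / 6 + β + 1)) := by
    have h1 : Tendsto (fun n : ℕ => (n : ℝ) * (exp (β / n) - 1) + (exp (β / n) - 1))
        atTop (nhds β) := by
      simpa using (key_mul_exp β).add ((exp_div_lim β).sub_const 1)
    have h2 : Tendsto (fun n : ℕ => 2 * ((n : ℝ) * (exp (β / n) - 1)) + (exp (β / n) - 1))
        atTop (nhds (2 * β)) := by
      simpa using ((key_mul_exp β).const_mul 2).add ((exp_div_lim β).sub_const 1)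
    exact (((h1.mul h2).div_const 6).add h1).add_const 1
  have h := hpre.mul hB
  have heq : (2 * β)⁻¹ * (β * (2 * β) / 6 + β + 1) = (β ^ 2 / 3 + β + 1) / (2 * β) := by
    field_simp
    ring
  rw [heq] at h
  apply h.congr'
  filter_upwards [eventually_ge_atTop 1] with n hn
  have hn' : (n : ℝ) ≠ 0 := Nat.cast_ne_zero.mpr (by omega)
  have hx : exp (2 * β / n) - 1 ≠ 0 := by
    have : (0:ℝ) < 2 * β / n := by positivity
    have := Real.exp_pos (2 * β / n)
    have hgt : 1 < exp (2 * β / n) := by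
      rw [show (1:ℝ) = exp 0 by simp]
      exact Real.exp_lt_exp.mpr (by positivity)
    linarith
  unfold L3
  simp only [mul_one_div, mul_assoc]
  push_cast
  field_simp
  ring


-- from t5.lean
variable {A B : Matrix (Fin 3) (Fin 3) ℝ}

lemma eigSet_finite (hA : A.IsHermitian) : (eigSet A).Finite := by
  rw [eigSet_eq hA]; exact Set.finite_range _

lemma eigSet_nonempty (hA : A.IsHermitian) : (eigSet A).Nonempty := by
  rw [eigSet_eq hA]; exact ⟨_, ⟨0, rfl⟩⟩

lemma spec_decomp (hA : A.IsHermitian) :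
    A = (hA.eigenvectorUnitary : Matrix (Fin 3) (Fin 3) ℝ) * diagonal hA.eigenvalues *
      (hA.eigenvectorUnitary : Matrix (Fin 3) (Fin 3) ℝ)ᵀ := by
  have hU := hA.spectral_theorem
  simp only [Unitary.conjStarAlgAut_apply, Unitary.coe_star] at hU
  rw [star_eq_transpose_real] at hU
  exact hU

lemma UUt (hA : A.IsHermitian) :
    (hA.eigenvectorUnitary : Matrix (Fin 3) (Fin 3) ℝ) *
      (hA.eigenvectorUnitary : Matrix (Fin 3) (Fin 3) ℝ)ᵀ = 1 := by
  have := (Matrix.mem_unitaryGroup_iff).mp hA.eigenvectorUnitary.2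
  rwa [star_eq_transpose_real] at this

lemma rayleigh_le_sSup (hA : A.IsHermitian) (x : Fin 3 → ℝ) (hx : x ⬝ᵥ x = 1) :
    x ⬝ᵥ A *ᵥ x ≤ sSup (eigSet A) := by
  rw [rayleigh_formula A _ _ (spec_decomp hA) x]
  have hev : ∀ i, hA.eigenvalues i ≤ sSup (eigSet A) := fun i =>
    le_csSup ((eigSet_finite hA).bddAbove) (by rw [eigSet_eq hA]; exact ⟨i, rfl⟩)
  calc ∑ i, hA.eigenvalues i * ((hA.eigenvectorUnitary : Matrix (Fin 3) (Fin 3) ℝ)ᵀ *ᵥ x) i ^ 2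
      ≤ ∑ i, sSup (eigSet A) * ((hA.eigenvectorUnitary : Matrix (Fin 3) (Fin 3) ℝ)ᵀ *ᵥ x) i ^ 2 :=
        Finset.sum_le_sum fun i _ => mul_le_mul_of_nonneg_right (hev i) (sq_nonneg _)
    _ = sSup (eigSet A) := by
        rw [← Finset.mul_sum, unit_transform _ (UUt hA) x hx, mul_one]

lemma sInf_le_rayleigh (hA : A.IsHermitian) (x : Fin 3 → ℝ) (hx : x ⬝ᵥ x = 1) :
    sInf (eigSet A) ≤ x ⬝ᵥ A *ᵥ x := by
  rw [rayleigh_formula A _ _ (spec_decomp hA) x]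
  have hev : ∀ i, sInf (eigSet A) ≤ hA.eigenvalues i := fun i =>
    csInf_le ((eigSet_finite hA).bddBelow) (by rw [eigSet_eq hA]; exact ⟨i, rfl⟩)
  calc sInf (eigSet A)
      = ∑ i, sInf (eigSet A) * ((hA.eigenvectorUnitary : Matrix (Fin 3) (Fin 3) ℝ)ᵀ *ᵥ x) i ^ 2 := by
        rw [← Finset.mul_sum, unit_transform _ (UUt hA) x hx, mul_one]
    _ ≤ _ := Finset.sum_le_sum fun i _ => mul_le_mul_of_nonneg_right (hev i) (sq_nonneg _)

lemma exists_unit_vec (hA : A.IsHermitian) {μ : ℝ} (hμ : μ ∈ eigSet A) :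
    ∃ x : Fin 3 → ℝ, x ⬝ᵥ x = 1 ∧ x ⬝ᵥ A *ᵥ x = μ := by
  rw [eigSet_eq hA] at hμ
  obtain ⟨j, hj⟩ := hμ
  have h1 : (inner ℝ (hA.eigenvectorBasis j) (hA.eigenvectorBasis j) : ℝ) = 1 := by
    rw [orthonormal_iff_ite.mp hA.eigenvectorBasis.orthonormal]
    simp
  have hx : (⇑(hA.eigenvectorBasis j) : Fin 3 → ℝ) ⬝ᵥ ⇑(hA.eigenvectorBasis j) = 1 := by
    rw [← h1, PiLp.inner_apply]
    simp only [RCLike.inner_apply, conj_trivial, dotProduct, mul_comm]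
  refine ⟨⇑(hA.eigenvectorBasis j), hx, ?_⟩
  rw [hA.mulVec_eigenvectorBasis, dotProduct_smul, smul_eq_mul, hx, mul_one, hj]

lemma quad_bound (M : Matrix (Fin 3) (Fin 3) ℝ) (x : Fin 3 → ℝ) (hx : x ⬝ᵥ x = 1) :
    |x ⬝ᵥ M *ᵥ x| ≤ ∑ i, ∑ j, |M i j| := by
  have hxi : ∀ i, |x i| ≤ 1 := by
    intro i
    rw [abs_le_one_iff_mul_self_le_one]
    calc x i * x i ≤ ∑ j, x j * x j :=
          Finset.single_le_sum (fun j _ => mul_self_nonneg (x j)) (Finset.mem_univ i)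
      _ = 1 := hx
  calc |x ⬝ᵥ M *ᵥ x| = |∑ i, x i * ∑ j, M i j * x j| := by
        simp [dotProduct, Matrix.mulVec]
    _ ≤ ∑ i, |x i * ∑ j, M i j * x j| := Finset.abs_sum_le_sum_abs _ _
    _ ≤ ∑ i, ∑ j, |M i j| := by
        refine Finset.sum_le_sum fun i _ => ?_
        rw [abs_mul]
        calc |x i| * |∑ j, M i j * x j| ≤ 1 * |∑ j, M i j * x j| :=
              mul_le_mul_of_nonneg_right (hxi i) (abs_nonneg _)
          _ = |∑ j, M i j * x j| := one_mul _
          _ ≤ ∑ j, |M i j * x j| := Finset.abs_sum_le_sum_abs _ _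
          _ ≤ ∑ j, |M i j| := Finset.sum_le_sum fun j _ => by
                rw [abs_mul]
                calc |M i j| * |x j| ≤ |M i j| * 1 :=
                      mul_le_mul_of_nonneg_left (hxi j) (abs_nonneg _)
                  _ = |M i j| :=mul_one _
    
lemma sSup_le_lip (hA : A.IsHermitian) (hB : B.IsHermitian) :
    sSup (eigSet B) ≤ sSup (eigSet A) + ∑ i, ∑ j, |B i j - A i j| := by
  obtain ⟨x, hx1, hx2⟩ := exists_unit_vec hB ((eigSet_nonempty hB).csSup_mem (eigSet_finite hB))
  have hsplit : x ⬝ᵥ B *ᵥ x = x ⬝ᵥ A *ᵥ x + x ⬝ᵥ (B - A) *ᵥ x := by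
    rw [Matrix.sub_mulVec, dotProduct_sub]; ring
  have h1 := rayleigh_le_sSup hA x hx1
  have h2 : |x ⬝ᵥ (B - A) *ᵥ x| ≤ ∑ i, ∑ j, |B i j - A i j| := by
    have := quad_bound (B - A) x hx1
    simpa [Matrix.sub_apply] using this
  have := abs_le.mp h2
  linarith [hx2 ▸ hsplit]

lemma sInf_ge_lip (hA : A.IsHermitian) (hB : B.IsHermitian) :
    sInf (eigSet A) - ∑ i, ∑ j, |B i j - A i j| ≤ sInf (eigSet B) := by
  obtain ⟨x, hx1, hx2⟩ := exists_unit_vec hB ((eigSet_nonempty hB).csInf_mem (eigSet_finite hB))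
  have hsplit : x ⬝ᵥ B *ᵥ x = x ⬝ᵥ A *ᵥ x + x ⬝ᵥ (B - A) *ᵥ x := by
    rw [Matrix.sub_mulVec, dotProduct_sub]; ring
  have h1 := sInf_le_rayleigh hA x hx1
  have h2 : |x ⬝ᵥ (B - A) *ᵥ x| ≤ ∑ i, ∑ j, |B i j - A i j| := by
    have := quad_bound (B - A) x hx1
    simpa [Matrix.sub_apply] using this
  have := abs_le.mp h2
  linarith [hx2 ▸ hsplit]


-- from t6.lean
variable {ι : Type*} {l : Filter ι} {F : ι → Matrix (Fin 3) (Fin 3) ℝ}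
  {M : Matrix (Fin 3) (Fin 3) ℝ}

lemma tendsto_dsum (h : ∀ i j, Tendsto (fun k => F k i j) l (nhds (M i j))) :
    Tendsto (fun k => ∑ i, ∑ j, |F k i j - M i j|) l (nhds 0) := by
  have : Tendsto (fun k => ∑ i : Fin 3, ∑ j : Fin 3, |F k i j - M i j|) l
      (nhds (∑ i : Fin 3, ∑ j : Fin 3, (0:ℝ))) := by
    refine tendsto_finset_sum _ fun i _ => tendsto_finset_sum _ fun j _ => ?_
    have := ((h i j).sub_const (M i j)).abs
    simpa using this
  simpa using this

lemma tendsto_sSup_eig (hF : ∀ k, (F k).IsHermitian) (hM : M.IsHermitian)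
    (h : ∀ i j, Tendsto (fun k => F k i j) l (nhds (M i j))) :
    Tendsto (fun k => sSup (eigSet (F k))) l (nhds (sSup (eigSet M))) := by
  have hd := tendsto_dsum h
  have hb : ∀ k, |sSup (eigSet (F k)) - sSup (eigSet M)| ≤ ∑ i, ∑ j, |F k i j - M i j| := by
    intro k
    rw [abs_sub_le_iff]
    constructor
    · have := sSup_le_lip hM (hF k)
      linarith
    · have := sSup_le_lip (hF k) hM
      have heq : ∑ i, ∑ j, |M i j - F k i j| = ∑ i, ∑ j, |F k i j - M i j| :=
        Finset.sum_congr rfl fun i _ => Finset.sum_congr rfl fun j _ => abs_sub_comm _ _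
      linarith [heq ▸ this]
  have h0 : Tendsto (fun k => sSup (eigSet (F k)) - sSup (eigSet M)) l (nhds 0) :=
    squeeze_zero_norm hb hd
  have := h0.add_const (sSup (eigSet M))
  simpa using this

lemma tendsto_sInf_eig (hF : ∀ k, (F k).IsHermitian) (hM : M.IsHermitian)
    (h : ∀ i j, Tendsto (fun k => F k i j) l (nhds (M i j))) :
    Tendsto (fun k => sInf (eigSet (F k))) l (nhds (sInf (eigSet M))) := by
  have hd := tendsto_dsum h
  have hb : ∀ k, |sInf (eigSet (F k)) - sInf (eigSet M)| ≤ ∑ i, ∑ j, |F k i j - M i j| := by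
    intro k
    rw [abs_sub_le_iff]
    constructor
    · have := sInf_ge_lip (hF k) hM
      have heq : ∑ i, ∑ j, |M i j - F k i j| = ∑ i, ∑ j, |F k i j - M i j| :=
        Finset.sum_congr rfl fun i _ => Finset.sum_congr rfl fun j _ => abs_sub_comm _ _
      linarith [heq ▸ this]
    · have := sInf_ge_lip hM (hF k)
      linarith
  have h0 : Tendsto (fun k => sInf (eigSet (F k)) - sInf (eigSet M)) l (nhds 0) :=
    squeeze_zero_norm hb hd
  have := h0.add_const (sInf (eigSet M))
  simpa using this

lemma tendsto_det3 (h : ∀ i j, Tendsto (fun k => F k i j) l (nhds (M i j))) :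
    Tendsto (fun k => (F k).det) l (nhds M.det) := by
  simp only [Matrix.det_fin_three]
  exact ((((((h 0 0).mul (h 1 1)).mul (h 2 2)).sub
    (((h 0 0).mul (h 1 2)).mul (h 2 1))).sub
    (((h 0 1).mul (h 1 0)).mul (h 2 2))).add
    (((h 0 1).mul (h 1 2)).mul (h 2 0))).add
    (((h 0 2).mul (h 1 0)).mul (h 2 1)) |>.sub
    (((h 0 2).mul (h 1 1)).mul (h 2 0))


-- ################ new material #################

noncomputable def la (β : ℝ) : ℝ := (2 + β) / 2
noncomputable def lb (β : ℝ) : ℝ := (2 + β) / 4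
noncomputable def lc (β : ℝ) : ℝ := (β ^ 2 / 3 + β + 1) / (2 * β)

noncomputable def Mlim (β γ : ℝ) : Matrix (Fin 3) (Fin 3) ℝ :=
  !![la β * la γ, lb β * la γ, la β * lb γ;
     lb β * la γ, lc β * la γ, lb β * lb γ;
     la β * lb γ, lb β * lb γ, la β * lc γ]

lemma Mlim_herm (β γ : ℝ) : (Mlim β γ).IsHermitian := by
  show (Mlim β γ)ᴴ = Mlim β γ
  ext i j
  fin_cases i <;> fin_cases j <;> simp [Mlim]

lemma FIM_herm (β γ : ℝ) (n m : ℕ) (d δ' : ℝ) : (FIM β γ n m d δ').IsHermitian := by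
  show (FIM β γ n m d δ')ᴴ = FIM β γ n m d δ'
  ext i j
  fin_cases i <;> fin_cases j <;> simp [FIM]

lemma la_pos {β : ℝ} (hβ : 0 < β) : 0 < la β := by unfold la; linarith

lemma lc_sub_pos {β : ℝ} (hβ : 0 < β) : 0 < lc β - la β / 4 := by
  have h : lc β - la β / 4 = (β ^ 2 / 3 + 2 * β + 4) / (8 * β) := by
    unfold lc la
    field_simp
    ring
  rw [h]
  positivity

lemma Q_pos {β γ : ℝ} (hβ : 0 < β) (hγ : 0 < γ) (x : Fin 3 → ℝ) (hx : x ⬝ᵥ x = 1) :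
    0 < x ⬝ᵥ (Mlim β γ) *ᵥ x := by
  have hla := la_pos hβ
  have hla' := la_pos hγ
  have hs := lc_sub_pos hβ
  have ht := lc_sub_pos hγ
  have hunit : x 0 * x 0 + x 1 * x 1 + x 2 * x 2 = 1 := by
    simpa [dotProduct, Fin.sum_univ_three] using hx
  have expand : x ⬝ᵥ (Mlim β γ) *ᵥ x =
      la β * la γ * (x 0 + x 1 / 2 + x 2 / 2) ^ 2 +
      (lc β - la β / 4) * la γ * x 1 ^ 2 +
      la β * (lc γ - la γ / 4) * x 2 ^ 2 := by
    have hb : lb β = la β / 2 := by unfold la lb; ring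
    have hb' : lb γ = la γ / 2 := by unfold la lb; ring
    simp [Mlim, dotProduct, Matrix.mulVec, Fin.sum_univ_three, hb, hb']
    ring
  rw [expand]
  by_contra hcon
  push_neg at hcon
  have ht1 : 0 ≤ la β * la γ * (x 0 + x 1 / 2 + x 2 / 2) ^ 2 :=
    mul_nonneg (mul_pos hla hla').le (sq_nonneg _)
  have ht2 : 0 ≤ (lc β - la β / 4) * la γ * x 1 ^ 2 :=
    mul_nonneg (mul_pos hs hla').le (sq_nonneg _)
  have ht3 : 0 ≤ la β * (lc γ - la γ / 4) * x 2 ^ 2 :=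
    mul_nonneg (mul_pos hla ht).le (sq_nonneg _)
  have hx1 : x 1 = 0 := by
    have hsq : x 1 ^ 2 ≤ 0 := by nlinarith [mul_pos hs hla']
    exact (pow_eq_zero_iff two_ne_zero).mp (le_antisymm hsq (sq_nonneg _))
  have hx2 : x 2 = 0 := by
    have hsq : x 2 ^ 2 ≤ 0 := by nlinarith [mul_pos hla ht]
    exact (pow_eq_zero_iff two_ne_zero).mp (le_antisymm hsq (sq_nonneg _))
  have hx0 : x 0 = 0 := by
    have hsq : (x 0 + x 1 / 2 + x 2 / 2) ^ 2 ≤ 0 := by nlinarith [mul_pos hla hla']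
    have := (pow_eq_zero_iff two_ne_zero).mp (le_antisymm hsq (sq_nonneg _))
    rw [hx1, hx2] at this
    linarith
  rw [hx0, hx1, hx2] at hunit
  norm_num at hunit

lemma eig_pos_Mlim {β γ : ℝ} (hβ : 0 < β) (hγ : 0 < γ) {μ : ℝ}
    (hμ : μ ∈ eigSet (Mlim β γ)) : 0 < μ := by
  obtain ⟨x, hx1, hx2⟩ := exists_unit_vec (Mlim_herm β γ) hμ
  rw [← hx2]
  exact Q_pos hβ hγ x hx1

lemma sInf_Mlim_pos {β γ : ℝ} (hβ : 0 < β) (hγ : 0 < γ) :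
    0 < sInf (eigSet (Mlim β γ)) :=
  eig_pos_Mlim hβ hγ
    ((eigSet_nonempty (Mlim_herm β γ)).csInf_mem (eigSet_finite (Mlim_herm β γ)))

lemma sSup_Mlim_pos {β γ : ℝ} (hβ : 0 < β) (hγ : 0 < γ) :
    0 < sSup (eigSet (Mlim β γ)) :=
  lt_of_lt_of_le (sInf_Mlim_pos hβ hγ)
    (csInf_le_csSup (eigSet_nonempty (Mlim_herm β γ)) (eigSet_finite (Mlim_herm β γ)).bddBelow
      (eigSet_finite (Mlim_herm β γ)).bddAbove)

lemma det_Mlim_pos {β γ : ℝ} (hβ : 0 < β) (hγ : 0 < γ) : 0 < (Mlim β γ).det := by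
  have hM := Mlim_herm β γ
  have hdet : (Mlim β γ).det = ∏ i, hM.eigenvalues i := by
    simpa using hM.det_eq_prod_eigenvalues
  rw [hdet]
  exact Finset.prod_pos fun i _ =>
    eig_pos_Mlim hβ hγ (by rw [eigSet_eq hM]; exact ⟨i, rfl⟩)

end GridAux

open GridAux Matrix in
theorem grid_double_ratio_tendsto_one (β γ : ℝ) (hβ : 0 < β) (hγ : 0 < γ) :
    Tendsto (fun nm : ℕ × ℕ => Dnm β γ (2 * nm.1) (2 * nm.2) / Dnm β γ nm.1 nm.2)
      atTop (nhds 1) ∧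
    Tendsto (fun nm : ℕ × ℕ => Dnm β γ (2 * nm.1) nm.2 / Dnm β γ nm.1 nm.2)
      atTop (nhds 1) ∧
    Tendsto (fun nm : ℕ × ℕ => Knm β γ (2 * nm.1) (2 * nm.2) / Knm β γ nm.1 nm.2)
      atTop (nhds 1) ∧
    Tendsto (fun nm : ℕ × ℕ => Knm β γ (2 * nm.1) nm.2 / Knm β γ nm.1 nm.2)
      atTop (nhds 1) := by
  have hfst : Tendsto (Prod.fst : ℕ × ℕ → ℕ) atTop atTop := by
    rw [← prod_atTop_atTop_eq]; exact tendsto_fst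
  have hsnd : Tendsto (Prod.snd : ℕ × ℕ → ℕ) atTop atTop := by
    rw [← prod_atTop_atTop_eq]; exact tendsto_snd
  set G : ℕ × ℕ → Matrix (Fin 3) (Fin 3) ℝ :=
    fun nm => FIM β γ (nm.1 + 1) (nm.2 + 1) (1 / nm.1) (1 / nm.2) with hG
  have hGh : ∀ k, (G k).IsHermitian := fun k => FIM_herm β γ _ _ _ _
  have hMh := Mlim_herm β γ
  have hent : ∀ i j, Tendsto (fun nm : ℕ × ℕ => G nm i j) atTop (nhds (Mlim β γ i j)) := by
    intro i j
    have e1 := (L1_lim β).comp hfst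
    have e2 := (L2_lim β).comp hfst
    have e3 := ((L3_lim β hβ)).comp hfst
    have f1 := (L1_lim γ).comp hsnd
    have f2 := (L2_lim γ).comp hsnd
    have f3 := ((L3_lim γ hγ)).comp hsnd
    fin_cases i <;> fin_cases j <;>
      simp only [hG, FIM, Mlim, Matrix.cons_val', Matrix.cons_val_zero, Matrix.cons_val_one,
        Matrix.head_cons, Matrix.empty_val', Matrix.cons_val_fin_one, Matrix.head_fin_const,
        Matrix.cons_val_two, Matrix.tail_cons, Fin.isValue, la, lb, lc] <;>
      first
        | exact e1.mul f1
        | exact e2.mul f1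
        | exact e1.mul f2
        | exact e3.mul f1
        | exact e2.mul f2
        | exact e1.mul f3
  -- determinant part
  have hD : Tendsto (fun nm : ℕ × ℕ => Dnm β γ nm.1 nm.2) atTop (nhds (Mlim β γ).det) :=
    tendsto_det3 hent
  have hDne : (Mlim β γ).det ≠ 0 := (det_Mlim_pos hβ hγ).ne'
  -- condition number part
  have hsup := tendsto_sSup_eig hGh hMh hent
  have hinf := tendsto_sInf_eig hGh hMh hent
  have hinfne : sInf (eigSet (Mlim β γ)) ≠ 0 := (sInf_Mlim_pos hβ hγ).ne'
  have hK : Tendsto (fun nm : ℕ × ℕ => Knm β γ nm.1 nm.2) atTop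
      (nhds (sSup (eigSet (Mlim β γ)) / sInf (eigSet (Mlim β γ)))) := hsup.div hinf hinfne
  have hKne : sSup (eigSet (Mlim β γ)) / sInf (eigSet (Mlim β γ)) ≠ 0 :=
    (div_pos (sSup_Mlim_pos hβ hγ) (sInf_Mlim_pos hβ hγ)).ne'
  have h2 : Tendsto (fun n : ℕ => 2 * n) atTop atTop :=
    tendsto_atTop_mono (fun n => by simp only [id_eq]; omega) tendsto_id
  have hφ1 : Tendsto (fun nm : ℕ × ℕ => (2 * nm.1, 2 * nm.2)) atTop (atTop : Filter (ℕ × ℕ)) := by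
    have h := Filter.Tendsto.prodMk (h2.comp hfst) (h2.comp hsnd)
    rw [prod_atTop_atTop_eq] at h
    exact h
  have hφ2 : Tendsto (fun nm : ℕ × ℕ => (2 * nm.1, nm.2)) atTop (atTop : Filter (ℕ × ℕ)) := by
    have h := Filter.Tendsto.prodMk (h2.comp hfst) hsnd
    rw [prod_atTop_atTop_eq] at h
    exact h
  refine ⟨?_, ?_, ?_, ?_⟩
  · have h := (hD.comp hφ1).div hD hDne
    rw [div_self hDne] at h
    exact h
  · have h := (hD.comp hφ2).div hD hDne
    rw [div_self hDne] at h
    exact h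
  · have h := (hK.comp hφ1).div hK hKne
    rw [div_self hKne] at h
    exact h
  · have h := (hK.comp hφ2).div hK hKne
    rw [div_self hKne] at h
    exact h
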